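/- Let $D_n = \hat{M}_n - M_n$ where $\hat{M}_n = K_{n,1}/n$ and $M_n = \sum_j p_j\mathbb{1}\{X_{n,j}=0\}$, with $X_{n,j}$ independent Binomial$(n,p_j)$ and $\sum_j p_j<\infty$. Then $\mathbb{E}[D_n] \leq \frac{2}{n(n-1)}\mathbb{E}[K_{n,2}]$ for all $n\geq 2$, where $K_{n,2} = \sum_j \mathbb{1}\{X_{n,j}=2\}$. -/

import Mathlib

open MeasureTheory ProbabilityTheory Real
open scoped ENNReal NNReal

lemma aux_tsum_indicator {Ω : Type*} [MeasurableSpace Ω] (μ : Measure Ω) [IsFiniteMeasure μ]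
    (Y : ℕ → Ω → ℕ) (hYm : ∀ j, Measurable (Y j)) (k : ℕ)
    (w c : ℕ → ℝ) (hw : ∀ j, 0 ≤ w j) (hc : ∀ j, 0 ≤ c j)
    (hμ : ∀ j, μ {ω | Y j ω = k} = ENNReal.ofReal (c j))
    (hs : Summable fun j => w j * c j) :
    Integrable (fun ω => ∑' j, if Y j ω = k then w j else 0) μ ∧
    ∫ ω, (∑' j, if Y j ω = k then w j else 0) ∂μ = ∑' j, w j * c j := by
  set S : ℕ → Set Ω := fun j => {ω | Y j ω = k} with hS
  have hSm : ∀ j, MeasurableSet (S j) := fun j => (hYm j) (measurableSet_singleton k)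
  set f : ℕ → Ω → ℝ := fun j ω => (S j).indicator (fun _ => w j) ω with hf
  have hfeq : ∀ j ω, (if Y j ω = k then w j else 0) = f j ω := by
    intro j ω
    simp [hf, hS, Set.indicator_apply, Set.mem_setOf_eq]
  have hfm : ∀ j, Measurable (f j) := fun j => measurable_const.indicator (hSm j)
  have hfnn : ∀ j ω, 0 ≤ f j ω := fun j ω => Set.indicator_nonneg (fun _ _ => hw j) ω
  have hnorm : ∀ j, (fun ω => (‖f j ω‖₊ : ℝ≥0∞)) =
      fun ω => (S j).indicator (fun _ => ENNReal.ofReal (w j)) ω := by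
    intro j
    funext ω
    by_cases hω : ω ∈ S j <;> simp [hf, hω, (by rw [← enorm_eq_nnnorm]; exact Real.enorm_eq_ofReal (hw j) : (‖w j‖₊ : ℝ≥0∞) = ENNReal.ofReal (w j))]
  have hlint : ∀ j, ∫⁻ ω, (‖f j ω‖₊ : ℝ≥0∞) ∂μ = ENNReal.ofReal (w j * c j) := by
    intro j
    rw [hnorm j, lintegral_indicator_const (hSm j), hμ j]
    simp [← ENNReal.ofReal_mul (hw j)]
  have hsum' : ∑' j, ∫⁻ ω, (‖f j ω‖₊ : ℝ≥0∞) ∂μ ≠ ⊤ := by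
    simp_rw [hlint]
    rw [← ENNReal.ofReal_tsum_of_nonneg (fun j => mul_nonneg (hw j) (hc j)) hs]
    exact ENNReal.ofReal_ne_top
  have heq0 : ∀ ω, (∑' j, if Y j ω = k then w j else 0) = ∑' j, f j ω := by
    intro ω; exact tsum_congr fun j => hfeq j ω
  have hint_each : ∀ j, ∫ ω, f j ω ∂μ = w j * c j := by
    intro j
    rw [hf]
    rw [integral_indicator_const (w j) (hSm j), measureReal_def, hμ j, smul_eq_mul,
      ENNReal.toReal_ofReal (hc j), mul_comm]
  constructor
  · have hmeas_g : Measurable fun ω => ∑' j, f j ω := by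
      have : (fun ω => ∑' j, f j ω) =
          fun ω => ((∑' j, (f j ω).toNNReal : ℝ≥0) : ℝ) := by
        funext ω
        rw [NNReal.coe_tsum]
        exact tsum_congr fun j => (Real.coe_toNNReal _ (hfnn j ω)).symm
      rw [this]
      exact (Measurable.nnreal_tsum fun j => (hfm j).real_toNNReal).coe_nnreal_real
    have : Integrable (fun ω => ∑' j, f j ω) μ := by
      refine ⟨hmeas_g.aestronglyMeasurable, ?_⟩
      show ∫⁻ ω, (‖∑' j, f j ω‖₊ : ℝ≥0∞) ∂μ < ⊤
      have hb : ∀ ω, (‖∑' j, f j ω‖₊ : ℝ≥0∞) ≤ ∑' j, ENNReal.ofReal (f j ω) := by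
        intro ω
        by_cases hSsum : Summable fun j => f j ω
        · rw [(by rw [← enorm_eq_nnnorm]; exact Real.enorm_eq_ofReal (tsum_nonneg fun j => hfnn j ω) : (‖∑' j, f j ω‖₊ : ℝ≥0∞) = ENNReal.ofReal (∑' j, f j ω)),
            ENNReal.ofReal_tsum_of_nonneg (fun j => hfnn j ω) hSsum]
        · rw [tsum_eq_zero_of_not_summable hSsum]; simp
      calc ∫⁻ ω, (‖∑' j, f j ω‖₊ : ℝ≥0∞) ∂μ
          ≤ ∫⁻ ω, ∑' j, ENNReal.ofReal (f j ω) ∂μ := lintegral_mono hb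
        _ = ∑' j, ∫⁻ ω, ENNReal.ofReal (f j ω) ∂μ :=
            lintegral_tsum fun j => ((hfm j).ennreal_ofReal).aemeasurable
        _ = ∑' j, ∫⁻ ω, (‖f j ω‖₊ : ℝ≥0∞) ∂μ := by
            refine tsum_congr fun j => lintegral_congr fun ω => ?_
            rw [(by rw [← enorm_eq_nnnorm]; exact Real.enorm_eq_ofReal (hfnn j ω) : (‖f j ω‖₊ : ℝ≥0∞) = ENNReal.ofReal (f j ω))]
        _ < ⊤ := hsum'.lt_top
    refine this.congr ?_
    filter_upwards with ω using (heq0 ω).symm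
  · calc ∫ ω, (∑' j, if Y j ω = k then w j else 0) ∂μ
        = ∫ ω, ∑' j, f j ω ∂μ := by exact integral_congr_ae (by filter_upwards with ω using heq0 ω)
      _ = ∑' j, ∫ ω, f j ω ∂μ :=
          integral_tsum (fun j => (hfm j).aestronglyMeasurable) hsum'
      _ = ∑' j, w j * c j := tsum_congr hint_each

theorem stmt
    {Ω : Type*} [MeasurableSpace Ω] (μ : Measure Ω) [IsProbabilityMeasure μ]
    (p : ℕ → ℝ) (hp : ∀ j, p j ∈ Set.Ioo (0 : ℝ) 1) (hsum : Summable p)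
    (n : ℕ) (X : ℕ → Ω → ℕ)
    (hmeas : ∀ j, Measurable (X j))
    (hindep : iIndepFun X μ)
    (hbin : ∀ j k, μ {ω | X j ω = k} =
      ENNReal.ofReal ((n.choose k : ℝ) * p j ^ k * (1 - p j) ^ (n - k)))
    (hn : 2 ≤ n) :
    (∫ ω, ((∑' j, if X j ω = 1 then (1 : ℝ) else 0) / n
        - ∑' j, if X j ω = 0 then p j else 0) ∂μ)
      ≤ 2 / (n * (n - 1)) *
          ∫ ω, (∑' j, if X j ω = 2 then (1 : ℝ) else 0) ∂μ := by
  have hp0 : ∀ j, 0 < p j := fun j => (hp j).1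
  have hp1 : ∀ j, p j < 1 := fun j => (hp j).2
  have ht0 : ∀ j, 0 ≤ 1 - p j := fun j => by linarith [hp1 j]
  have ht1 : ∀ j, 1 - p j ≤ 1 := fun j => by linarith [hp0 j]
  have htpow : ∀ j m, (1 - p j) ^ m ≤ 1 := fun j m => pow_le_one₀ (ht0 j) (ht1 j)
  have htpow0 : ∀ j m, 0 ≤ (1 - p j) ^ m := fun j m => pow_nonneg (ht0 j) m
  set c1 : ℕ → ℝ := fun j => (n.choose 1 : ℝ) * p j ^ 1 * (1 - p j) ^ (n - 1) with hc1
  set c0 : ℕ → ℝ := fun j => (n.choose 0 : ℝ) * p j ^ 0 * (1 - p j) ^ (n - 0) with hc0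
  set c2 : ℕ → ℝ := fun j => (n.choose 2 : ℝ) * p j ^ 2 * (1 - p j) ^ (n - 2) with hc2
  have hc1nn : ∀ j, 0 ≤ c1 j := fun j =>
    mul_nonneg (mul_nonneg (Nat.cast_nonneg _) (pow_nonneg (hp0 j).le _)) (htpow0 j _)
  have hc0nn : ∀ j, 0 ≤ c0 j := fun j =>
    mul_nonneg (mul_nonneg (Nat.cast_nonneg _) (pow_nonneg (hp0 j).le _)) (htpow0 j _)
  have hc2nn : ∀ j, 0 ≤ c2 j := fun j =>
    mul_nonneg (mul_nonneg (Nat.cast_nonneg _) (pow_nonneg (hp0 j).le _)) (htpow0 j _)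
  have hkey : ∀ j m, p j ^ 2 * (1 - p j) ^ m ≤ p j := fun j m => by
    nlinarith [htpow j m, htpow0 j m, (hp0 j).le, (hp1 j).le]
  have hs1 : Summable fun j => (1 : ℝ) * c1 j := by
    apply Summable.of_nonneg_of_le (fun j => by simpa using hc1nn j) (fun j => ?_)
      (hsum.mul_left (n : ℝ))
    simp only [one_mul, hc1, Nat.choose_one_right, pow_one]
    calc (n : ℝ) * p j * (1 - p j) ^ (n - 1) ≤ (n : ℝ) * p j * 1 :=
          mul_le_mul_of_nonneg_left (htpow j _)
            (mul_nonneg (Nat.cast_nonneg n) (hp0 j).le)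
      _ = (n : ℝ) * p j := by ring
  have hs0 : Summable fun j => p j * c0 j := by
    apply Summable.of_nonneg_of_le
      (fun j => mul_nonneg (hp0 j).le (hc0nn j)) (fun j => ?_) hsum
    simp only [hc0, Nat.choose_zero_right, pow_zero, Nat.cast_one, one_mul, Nat.sub_zero]
    calc p j * (1 - p j) ^ n ≤ p j * 1 :=
          mul_le_mul_of_nonneg_left (htpow j _) (hp0 j).le
      _ = p j := mul_one _
  have hs2 : Summable fun j => (1 : ℝ) * c2 j := by
    apply Summable.of_nonneg_of_le (fun j => by simpa using hc2nn j) (fun j => ?_)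
      (hsum.mul_left ((n.choose 2 : ℝ)))
    simp only [one_mul, hc2]
    calc (n.choose 2 : ℝ) * p j ^ 2 * (1 - p j) ^ (n - 2)
        = (n.choose 2 : ℝ) * (p j ^ 2 * (1 - p j) ^ (n - 2)) := by ring
      _ ≤ (n.choose 2 : ℝ) * p j :=
          mul_le_mul_of_nonneg_left (hkey j _) (Nat.cast_nonneg _)
  obtain ⟨int1, eq1⟩ := aux_tsum_indicator μ X hmeas 1 (fun _ => 1) c1
    (fun _ => zero_le_one) hc1nn (fun j => hbin j 1) hs1
  obtain ⟨int0, eq0⟩ := aux_tsum_indicator μ X hmeas 0 p c0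
    (fun j => (hp0 j).le) hc0nn (fun j => hbin j 0) hs0
  obtain ⟨int2, eq2⟩ := aux_tsum_indicator μ X hmeas 2 (fun _ => 1) c2
    (fun _ => zero_le_one) hc2nn (fun j => hbin j 2) hs2
  rw [integral_sub (int1.div_const _) int0, integral_div, eq1, eq0, eq2]
  simp only [one_mul]
  -- now pure real analysis
  have hn0 : (0 : ℝ) < n := by exact_mod_cast (by omega : 0 < n)
  have hnR : (2 : ℝ) ≤ n := by exact_mod_cast hn
  have hn1 : (0 : ℝ) < (n : ℝ) - 1 := by linarith
  have hchoose : (n.choose 2 : ℝ) * 2 = (n : ℝ) * ((n : ℝ) - 1) := by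
    have h1 : n.choose 2 * 2 = n * (n - 1) := by
      rw [Nat.choose_two_right]
      refine Nat.div_mul_cancel ?_
      have he := Nat.even_mul_succ_self (n - 1)
      rw [Nat.sub_add_cancel (by omega : 1 ≤ n)] at he
      rw [mul_comm]
      exact he.two_dvd
    have h2 := congrArg (fun x : ℕ => (x : ℝ)) h1
    simp only [Nat.cast_mul, Nat.cast_ofNat, Nat.cast_sub (by omega : 1 ≤ n),
      Nat.cast_one] at h2
    linarith [h2]
  have hSd1 : Summable fun j => p j ^ 2 * (1 - p j) ^ (n - 1) :=
    Summable.of_nonneg_of_le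
      (fun j => mul_nonneg (pow_nonneg (hp0 j).le 2) (htpow0 j _))
      (fun j => hkey j _) hsum
  have hSd2 : Summable fun j => p j ^ 2 * (1 - p j) ^ (n - 2) :=
    Summable.of_nonneg_of_le
      (fun j => mul_nonneg (pow_nonneg (hp0 j).le 2) (htpow0 j _))
      (fun j => hkey j _) hsum
  have hs1' : Summable fun j => c1 j / n := (hs1.congr (fun j => (one_mul _))).div_const _
  have hL : (∑' j, c1 j) / (n : ℝ) - ∑' j, p j * c0 j
      = ∑' j, p j ^ 2 * (1 - p j) ^ (n - 1) := by
    rw [← tsum_div_const, ← Summable.tsum_sub hs1' hs0]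
    refine tsum_congr fun j => ?_
    have hpow : (1 - p j) ^ (n - 0) = (1 - p j) ^ (n - 1) * (1 - p j) := by
      rw [Nat.sub_zero, ← pow_succ]
      congr 1
      omega
    simp only [hc1, hc0, Nat.choose_one_right, pow_one, Nat.choose_zero_right, Nat.cast_one,
      one_mul, pow_zero, hpow]
    field_simp
    ring
  have hR : 2 / ((n : ℝ) * ((n : ℝ) - 1)) * ∑' j, c2 j
      = ∑' j, p j ^ 2 * (1 - p j) ^ (n - 2) := by
    rw [← tsum_mul_left]
    refine tsum_congr fun j => ?_
    simp only [hc2]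
    have hC : (n.choose 2 : ℝ) = (n : ℝ) * ((n : ℝ) - 1) / 2 := by linarith [hchoose]
    have hne : (n : ℝ) * ((n : ℝ) - 1) ≠ 0 := ne_of_gt (mul_pos hn0 hn1)
    rw [hC]
    field_simp
  rw [hL, hR]
  refine Summable.tsum_le_tsum (fun j => ?_) hSd1 hSd2
  exact mul_le_mul_of_nonneg_left
    (pow_le_pow_of_le_one (ht0 j) (ht1 j) (by omega)) (by positivity)
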